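/- Let p be a prime, m ≥ 1, and ω a natural number with ω ≤ m(p−1). Let P denote the Jacobson radical of A. Then ψ(C_ω(m,p)) = P^{m(p−1)−ω}, i.e. the image in A of the Generalized Reed–Muller code of order ω equals the (m(p−1)−ω)-th power of the radical, and the set { (x_0 − 1)^{i_0} ⋯ (x_{m−1} − 1)^{i_{m−1}} : 0 ≤ i_k ≤ p−1 for all k, Σ_{k=0}^{m−1} i_k ≥ m(p−1) − ω } is an F_p-linear basis of P^{m(p−1)−ω}. -/

import Mathlib

open MvPolynomial

/-- The weighted degree: total degree of `F(Y_0^{w_0}, …, Y_{m-1}^{w_{m-1}})`. -/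
noncomputable def wdeg {F : Type*} [CommSemiring F] {m : ℕ} (w : Fin m → ℕ)
    (f : MvPolynomial (Fin m) F) : ℕ :=
  ((MvPolynomial.bind₁ (fun l : Fin m => (MvPolynomial.X l : MvPolynomial (Fin m) F) ^ (w l))) f).totalDegree

/-- The weighted Reed–Muller code `WRMC_ω(m,q)` as a subspace of `F^{q^m}`. -/
noncomputable def WRMC (F : Type*) [CommSemiring F] [Fintype F] (m : ℕ) (w : Fin m → ℕ) (ω : ℕ) :
    Submodule F ((Fin m → F) → F) :=
  Submodule.span F
    {v | ∃ f : MvPolynomial (Fin m) F, wdeg w f ≤ ω ∧ v = fun P => MvPolynomial.eval P f}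

/-- The generalized Reed–Muller code `C_ω(m,q)`. -/
noncomputable def GRM (F : Type*) [CommSemiring F] [Fintype F] (m ω : ℕ) :
    Submodule F ((Fin m → F) → F) :=
  Submodule.span F
    {v | ∃ f : MvPolynomial (Fin m) F, f.totalDegree ≤ ω ∧ v = fun P => MvPolynomial.eval P f}

/-- The homogeneous Reed–Muller code `HRMC_d(m,q)`. -/
noncomputable def HRMC (F : Type*) [CommSemiring F] [Fintype F] (m d : ℕ) :
    Submodule F ((Fin m → F) → F) :=
  Submodule.span F
    {v | ∃ f : MvPolynomial (Fin m) F, f.IsHomogeneous d ∧ v = fun P => MvPolynomial.eval P f}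

/-- The ideal `(X_0^p - 1, …, X_{m-1}^p - 1)`. -/
noncomputable def Aideal (p m : ℕ) : Ideal (MvPolynomial (Fin m) (ZMod p)) :=
  Ideal.span (Set.range fun l : Fin m => (MvPolynomial.X l : MvPolynomial (Fin m) (ZMod p)) ^ p - 1)

/-- The modular algebra `A = F_p[X_0,…,X_{m-1}]/(X_0^p-1,…,X_{m-1}^p-1)`. -/
abbrev ModA (p m : ℕ) : Type := MvPolynomial (Fin m) (ZMod p) ⧸ Aideal p m

/-- `x_l`, the image of `X_l` in `A`. -/
noncomputable def xA (p m : ℕ) (l : Fin m) : ModA p m :=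
  Ideal.Quotient.mk (Aideal p m) (MvPolynomial.X l)

/-- The identification `ψ : F_p^{p^m} → A` sending `(c_j)` to `Σ_j c_j x_0^{j_0} ⋯ x_{m-1}^{j_{m-1}}`. -/
noncomputable def psi (p m : ℕ) [NeZero p] : ((Fin m → ZMod p) → ZMod p) →ₗ[ZMod p] ModA p m where
  toFun c := ∑ j : Fin m → ZMod p, c j • ∏ l, (xA p m l) ^ (j l).val
  map_add' a b := by simp [add_smul, Finset.sum_add_distrib]
  map_smul' r a := by simp [Finset.smul_sum, smul_smul]

/-- `b(η) = ∏_{l ∈ η} (x_l - 1)` in the binary algebra `A`. -/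
noncomputable def bElt (m : ℕ) (η : Finset (Fin m)) : ModA 2 m :=
  ∏ l ∈ η, (xA 2 m l - 1)

set_option synthInstance.maxHeartbeats 1000000
set_option maxHeartbeats 1000000
open Finset

theorem prod_smul'' {ι α β : Type*} [CommMonoid β] [CommMonoid α] [MulAction α β]
    [IsScalarTower α β β] [SMulCommClass α β β] (s : Finset ι) (b : ι → α) (f : ι → β) :
    ∏ i ∈ s, b i • f i = (∏ i ∈ s, b i) • ∏ i ∈ s, f i := by
  induction s using Finset.cons_induction_on with
  | empty => simp
  | cons _ _ hj ih => rw [Finset.prod_cons, ih, smul_mul_smul_comm, ← Finset.prod_cons hj,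
      ← Finset.prod_cons hj, Finset.prod_cons, Finset.prod_cons]


noncomputable def uJen (p m : ℕ) (i : Fin m → Fin p) : ModA p m :=
  ∏ l, (xA p m l - 1) ^ ((i l : ℕ))
noncomputable def Bideal (p m : ℕ) : Ideal (MvPolynomial (Fin m) (ZMod p)) :=
  Ideal.span (Set.range fun l : Fin m => (MvPolynomial.X l : MvPolynomial (Fin m) (ZMod p)) ^ p)

noncomputable def expOf {p m : ℕ} (i : Fin m → Fin p) : Fin m →₀ ℕ :=
  Finsupp.equivFunOnFinite.symm (fun l => (i l : ℕ))

noncomputable def pJen (p m : ℕ) (d : Fin m → ℕ) : ModA p m :=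
  ∏ l, (xA p m l - 1) ^ (d l)
noncomputable def WJen (p m : ℕ) (K : ℕ) : Submodule (ZMod p) (ModA p m) :=
  Submodule.span (ZMod p) (uJen p m '' {i | K ≤ ∑ k, ((i k : ℕ))})
noncomputable def Mrad (p m : ℕ) : Ideal (ModA p m) :=
  Ideal.span (Set.range fun l => xA p m l - 1)

noncomputable def fPoly (p : ℕ) [NeZero p] (a k : ℕ) : ZMod p :=
  ∑ t : ZMod p, t ^ a * ∏ r ∈ range k, (t - (r : ℕ))


lemma tri_indep {ι F M : Type*} [Fintype ι] [PartialOrder ι] [Field F]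
    [AddCommGroup M] [Module F M]
    (e v : ι → M) (he : LinearIndependent F e) (c : ι → ι → F)
    (hv : ∀ a, v a = ∑ j, c a j • e j)
    (htri : ∀ a j, c a j ≠ 0 → a ≤ j) (hdiag : ∀ a, c a a ≠ 0) :
    LinearIndependent F v := by
  classical
  rw [Fintype.linearIndependent_iff]
  intro g hg
  have h1 : ∑ j, (∑ a, g a * c a j) • e j = 0 := by
    calc ∑ j, (∑ a, g a * c a j) • e j
        = ∑ j, ∑ a, (g a * c a j) • e j :=
          Finset.sum_congr rfl (fun j _ => Finset.sum_smul)
      _ = ∑ a, ∑ j, (g a * c a j) • e j := Finset.sum_comm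
      _ = ∑ a, g a • v a := by
          refine Finset.sum_congr rfl (fun a _ => ?_)
          rw [hv, Finset.smul_sum]
          exact Finset.sum_congr rfl (fun j _ => (smul_smul _ _ _).symm)
      _ = 0 := hg
  have hco : ∀ j, (∑ a, g a * c a j) = 0 :=
    Fintype.linearIndependent_iff.mp he _ h1
  by_contra hne
  push_neg at hne
  obtain ⟨a₁, ha₁⟩ := hne
  have hTne : (Finset.univ.filter (fun a => g a ≠ 0)).Nonempty :=
    ⟨a₁, Finset.mem_filter.mpr ⟨Finset.mem_univ _, ha₁⟩⟩
  obtain ⟨a₀, ha₀mem, ha₀min'⟩ := Finset.exists_minimal hTne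
  have ha₀min : ∀ x ∈ Finset.univ.filter (fun a => g a ≠ 0), ¬ x < a₀ :=
    fun x hx hlt => hlt.not_ge (ha₀min' hx hlt.le)
  have ha₀ : g a₀ ≠ 0 := (Finset.mem_filter.mp ha₀mem).2
  have := hco a₀
  rw [Finset.sum_eq_single a₀] at this
  · exact ha₀ ((mul_eq_zero.mp this).resolve_right (hdiag a₀))
  · intro b _ hb
    by_cases hgb : g b = 0
    · rw [hgb, zero_mul]
    · by_cases hcb : c b a₀ = 0
      · rw [hcb, mul_zero]
      · have hble : b ≤ a₀ := htri b a₀ hcb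
        have hblt : b < a₀ := lt_of_le_of_ne hble hb
        exact absurd hblt (ha₀min b (Finset.mem_filter.mpr ⟨Finset.mem_univ _, hgb⟩))
  · intro h; exact absurd (Finset.mem_univ a₀) h

lemma tri_span {ι F M : Type*} [Fintype ι] [PartialOrder ι] [Field F]
    [AddCommGroup M] [Module F M]
    (e v : ι → M) (he : LinearIndependent F e) (c : ι → ι → F)
    (hv : ∀ a, v a = ∑ j, c a j • e j)
    (htri : ∀ a j, c a j ≠ 0 → a ≤ j) (hdiag : ∀ a, c a a ≠ 0)
    (S : Set ι) (hS : ∀ ⦃i j⦄, i ≤ j → i ∈ S → j ∈ S) :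
    Submodule.span F (v '' S) = Submodule.span F (e '' S) := by
  classical
  have hle : Submodule.span F (v '' S) ≤ Submodule.span F (e '' S) := by
    rw [Submodule.span_le]
    rintro y ⟨a, haS, rfl⟩
    rw [SetLike.mem_coe, hv]
    refine Submodule.sum_mem _ (fun j _ => ?_)
    by_cases hc : c a j = 0
    · rw [hc, zero_smul]; exact Submodule.zero_mem _
    · exact Submodule.smul_mem _ _
        (Submodule.subset_span ⟨j, hS (htri a j hc) haS, rfl⟩)
  haveI : FiniteDimensional F (Submodule.span F (e '' S)) :=
    FiniteDimensional.span_of_finite F ((Set.toFinite S).image e)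
  refine Submodule.eq_of_le_of_finrank_le hle ?_
  have hvind : LinearIndependent F v := tri_indep e v he c hv htri hdiag
  have h1 : e '' S = Set.range (e ∘ (Subtype.val : S → ι)) := by
    rw [Set.range_comp, Subtype.range_val]
  have h2 : v '' S = Set.range (v ∘ (Subtype.val : S → ι)) := by
    rw [Set.range_comp, Subtype.range_val]
  rw [h1, h2]
  rw [finrank_span_eq_card (he.comp Subtype.val Subtype.val_injective),
    finrank_span_eq_card (hvind.comp Subtype.val Subtype.val_injective)]

section Main

variable (p m : ℕ) [Fact p.Prime]

instance : NeZero p := ⟨(Fact.out : p.Prime).ne_zero⟩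


/-- augmentation -/
noncomputable def epsA : ModA p m →+* ZMod p :=
  Ideal.Quotient.lift (Aideal p m) (MvPolynomial.eval (fun _ => 1)) (by
    intro f hf
    refine Submodule.span_induction ?_ ?_ ?_ ?_ hf
    · rintro g ⟨l, rfl⟩; simp
    · simp
    · intro a b _ _ ha hb; simp [ha, hb]
    · intro a b _ hb; simp [smul_eq_mul, hb])

lemma epsA_mk (f : MvPolynomial (Fin m) (ZMod p)) :
    epsA p m (Ideal.Quotient.mk _ f) = MvPolynomial.eval (fun _ => 1) f := rfl

instance : Nontrivial (ModA p m) := by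
  refine nontrivial_of_ne 1 0 (fun h => ?_)
  have := congrArg (epsA p m) h
  simp at this

lemma charA : CharP (ModA p m) p := by
  have : Function.Injective (algebraMap (ZMod p) (ModA p m)) :=
    (algebraMap (ZMod p) (ModA p m)).injective
  exact charP_of_injective_ringHom this p

lemma xA_pow_p (l : Fin m) : (xA p m l) ^ p = 1 := by
  have : (Ideal.Quotient.mk (Aideal p m)) (X l ^ p - 1) = 0 := by
    rw [Ideal.Quotient.eq_zero_iff_mem]
    exact Ideal.subset_span ⟨l, rfl⟩
  have := sub_eq_zero.mp (by simpa using this)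
  simpa [xA] using this

lemma xA_sub_one_pow_p (l : Fin m) : (xA p m l - 1) ^ p = 0 := by
  haveI := charA p m
  rw [sub_pow_char (xA p m l) 1]
  simp [xA_pow_p]



noncomputable def thA : ModA p m →ₐ[ZMod p] (MvPolynomial (Fin m) (ZMod p) ⧸ Bideal p m) :=
  Ideal.Quotient.liftₐ (Aideal p m)
    ((Ideal.Quotient.mkₐ (ZMod p) (Bideal p m)).comp
      (MvPolynomial.aeval (fun l => MvPolynomial.X l + 1)))
    (by
      intro f hf
      refine Submodule.span_induction ?_ ?_ ?_ ?_ hf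
      · rintro g ⟨l, rfl⟩
        have h1 : (MvPolynomial.aeval (fun l : Fin m => (MvPolynomial.X l + 1 : MvPolynomial (Fin m) (ZMod p))))
            ((X l : MvPolynomial (Fin m) (ZMod p)) ^ p - 1) = X l ^ p := by
          rw [map_sub, map_pow, aeval_X, map_one, add_pow_char, one_pow, add_sub_cancel_right]
        rw [AlgHom.comp_apply, h1, Ideal.Quotient.mkₐ_eq_mk, Ideal.Quotient.eq_zero_iff_mem]
        exact Ideal.subset_span ⟨l, rfl⟩
      · simp
      · intro a b _ _ ha hb
        rw [map_add, ha, hb, add_zero]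
      · intro a b _ hb
        rw [smul_eq_mul, map_mul, hb, mul_zero])

lemma thA_x (l : Fin m) :
    thA p m (xA p m l - 1) = Ideal.Quotient.mk (Bideal p m) (MvPolynomial.X l) := by
  have h0 : thA p m (xA p m l) = Ideal.Quotient.mk (Bideal p m) (MvPolynomial.X l + 1) := by
    simp only [thA, xA, Ideal.Quotient.liftₐ_apply, Ideal.Quotient.lift_mk, AlgHom.coe_toRingHom,
      AlgHom.comp_apply, aeval_X, Ideal.Quotient.mkₐ_eq_mk]
    erw [Ideal.Quotient.lift_mk]
    simp
  rw [map_sub, map_one, h0, ← map_one (Ideal.Quotient.mk (Bideal p m)), ← map_sub]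
  congr 1
  ring

lemma monomial_expOf_eq (i : Fin m → Fin p) :
    (monomial (expOf i) (1 : ZMod p)) = ∏ l, X l ^ ((i l : ℕ)) := by
  rw [← prod_X_pow_eq_monomial]
  refine Finset.prod_subset (Finset.subset_univ _) ?_
  intro x _ hx
  simp only [Finsupp.notMem_support_iff] at hx
  have hx' : ((i x : ℕ)) = 0 := hx
  rw [hx, pow_zero]

lemma thA_uJen (i : Fin m → Fin p) :
    thA p m (uJen p m i) = Ideal.Quotient.mk (Bideal p m) (monomial (expOf i) 1) := by
  rw [uJen, map_prod]
  simp_rw [map_pow, thA_x]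
  rw [monomial_expOf_eq, map_prod]
  simp [map_pow]

lemma uJen_indep : LinearIndependent (ZMod p) (uJen p m) := by
  rw [Fintype.linearIndependent_iff]
  intro g hg i₀
  have h1 : thA p m (∑ i, g i • uJen p m i) = 0 := by rw [hg, map_zero]
  rw [map_sum] at h1
  simp_rw [map_smul, thA_uJen] at h1
  have h2 : Ideal.Quotient.mk (Bideal p m) (∑ i, g i • monomial (expOf i) 1) = 0 := by
    rw [map_sum]; refine (Finset.sum_congr rfl fun i _ => ?_).trans h1
    exact map_smul (Ideal.Quotient.mkₐ (ZMod p) (Bideal p m)) (g i) _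
  rw [Ideal.Quotient.eq_zero_iff_mem, Bideal, Ideal.span, Submodule.mem_span_range_iff_exists_fun] at h2
  obtain ⟨c, hc⟩ := h2
  have hz : ∀ l : Fin m, MvPolynomial.coeff (expOf i₀) (c l • (X l ^ p : MvPolynomial (Fin m) (ZMod p))) = 0 := by
    intro l
    rw [smul_eq_mul, X_pow_eq_monomial, coeff_mul_monomial']
    rw [if_neg]
    intro hle
    have h3 : p ≤ (expOf i₀) l := by simpa using hle l
    have h4 : (expOf i₀) l = ((i₀ l : ℕ)) := rfl
    have h5 : ((i₀ l : ℕ)) < p := (i₀ l).2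
    omega
  have hco : MvPolynomial.coeff (expOf i₀) (∑ i : Fin m → Fin p, g i • monomial (expOf i) (1 : ZMod p)) = 0 := by
    rw [← hc, coeff_sum]
    exact Finset.sum_eq_zero (fun l _ => hz l)
  rw [coeff_sum] at hco
  have hterm : ∀ i : Fin m → Fin p, MvPolynomial.coeff (expOf i₀) (g i • monomial (expOf i) (1 : ZMod p))
      = if i = i₀ then g i else 0 := by
    intro i
    rw [coeff_smul, coeff_monomial]
    have heq : expOf i = expOf i₀ ↔ i = i₀ := by
      constructor
      · intro h; funext l
        have := congrArg (fun s => s l) h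
        exact Fin.ext this
      · rintro rfl; rfl
    by_cases h : i = i₀
    · rw [if_pos ((heq.mpr h)), if_pos h, smul_eq_mul, mul_one]
    · rw [if_neg (fun hh => h (heq.mp hh)), if_neg h, smul_zero]
  rw [Finset.sum_congr rfl (fun i _ => hterm i)] at hco
  simpa using hco

lemma xA_pow_mod (l : Fin m) (n : ℕ) : (xA p m l) ^ n = (xA p m l) ^ (n % p) := by
  conv_lhs => rw [← Nat.div_add_mod n p]
  rw [pow_add, pow_mul, xA_pow_p, one_pow, one_mul]

/-- single-variable binomial expansion in A -/
lemma xA_pow_expand (l : Fin m) (j : ℕ) (hj : j < p) :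
    (xA p m l) ^ j = ∑ k : Fin p, ((Nat.choose j (k : ℕ) : ZMod p)) • (xA p m l - 1) ^ ((k : ℕ)) := by
  have h1 : (xA p m l) ^ j = ((xA p m l - 1) + 1) ^ j := by ring_nf
  rw [h1, add_pow]
  simp only [one_pow, mul_one]
  rw [Fin.sum_univ_eq_sum_range
    (fun k => ((Nat.choose j k : ZMod p)) • (xA p m l - 1) ^ k)]
  rw [← Finset.sum_subset (Finset.range_subset_range.mpr hj)]
  · refine Finset.sum_congr rfl (fun k _ => ?_)
    rw [Algebra.smul_def ((Nat.choose j k : ZMod p)) ((xA p m l - 1) ^ k), map_natCast, mul_comm]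
  · intro k _ hk
    simp only [Finset.mem_range, not_lt] at hk
    rw [Nat.choose_eq_zero_of_lt (by omega), Nat.cast_zero, zero_smul]

/-- expansion of a monomial in x's in terms of the Jennings family -/
lemma xprod_expand (j : Fin m → Fin p) :
    (∏ l, (xA p m l) ^ ((j l : ℕ))) =
      ∑ κ : Fin m → Fin p, (∏ l, (Nat.choose (j l : ℕ) (κ l : ℕ) : ZMod p)) • uJen p m κ := by
  have h1 : ∀ l : Fin m, (xA p m l) ^ ((j l : ℕ))
      = ∑ k : Fin p, ((Nat.choose (j l : ℕ) (k : ℕ) : ZMod p)) • (xA p m l - 1) ^ ((k : ℕ)) :=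
    fun l => xA_pow_expand p m l _ (j l).2
  calc ∏ l, (xA p m l) ^ ((j l : ℕ))
      = ∏ l, ∑ k : Fin p, ((Nat.choose (j l : ℕ) (k : ℕ) : ZMod p)) • (xA p m l - 1) ^ ((k : ℕ)) := by
        exact Finset.prod_congr rfl (fun l _ => h1 l)
    _ = ∑ κ ∈ Fintype.piFinset (fun _ : Fin m => (Finset.univ : Finset (Fin p))),
          ∏ l, ((Nat.choose (j l : ℕ) ((κ l) : ℕ) : ZMod p)) • (xA p m l - 1) ^ (((κ l) : ℕ)) :=
        Finset.prod_univ_sum _ _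
    _ = ∑ κ : Fin m → Fin p, (∏ l, (Nat.choose (j l : ℕ) (κ l : ℕ) : ZMod p)) • uJen p m κ := by
        rw [Fintype.piFinset_univ]
        exact Finset.sum_congr rfl (fun κ _ => prod_smul'' _ _ _)

lemma uJen_span : Submodule.span (ZMod p) (Set.range (uJen p m)) = ⊤ := by
  rw [eq_top_iff]
  rintro y -
  obtain ⟨f, rfl⟩ := Ideal.Quotient.mk_surjective (I := Aideal p m) y
  induction f using MvPolynomial.induction_on' with
  | add f g hf hg => rw [map_add]; exact Submodule.add_mem _ hf hg
  | monomial d a =>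
    have hmk : (Ideal.Quotient.mk (Aideal p m)) (monomial d a)
        = a • ∏ l, (xA p m l) ^ ((d l) % p) := by
      rw [← Ideal.Quotient.mkₐ_eq_mk (ZMod p), monomial_eq]
      have : (C a * d.prod fun n e => X n ^ e : MvPolynomial (Fin m) (ZMod p))
          = a • (d.prod fun n e => X n ^ e) := by
        rw [Algebra.smul_def, algebraMap_eq]
      rw [this, map_smul]
      congr 1
      have h2 : (Ideal.Quotient.mkₐ (ZMod p) (Aideal p m)) (d.prod fun n e => X n ^ e)
          = ∏ l ∈ d.support, (xA p m l) ^ (d l) := by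
        rw [Finsupp.prod, map_prod]
        exact Finset.prod_congr rfl (fun l _ => by rw [map_pow]; rfl)
      rw [h2, Finset.prod_subset (Finset.subset_univ d.support)
        (fun l _ hl => by rw [Finsupp.notMem_support_iff.mp hl, pow_zero])]
      exact Finset.prod_congr rfl (fun l _ => xA_pow_mod p m l (d l))
    rw [hmk]
    refine Submodule.smul_mem _ _ ?_
    have hlt : ∀ l : Fin m, d l % p < p := fun l => Nat.mod_lt _ (Fact.out : p.Prime).pos
    have : (∏ l, (xA p m l) ^ ((d l) % p)) = ∏ l, (xA p m l) ^ (((fun l => (⟨d l % p, hlt l⟩ : Fin p)) l : ℕ)) := rfl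
    rw [this, xprod_expand]
    exact Submodule.sum_mem _ (fun κ _ => Submodule.smul_mem _ _
      (Submodule.subset_span ⟨κ, rfl⟩))

lemma pJen_eq_uJen (d : Fin m → ℕ) (hd : ∀ l, d l < p) :
    pJen p m d = uJen p m (fun l => ⟨d l, hd l⟩) := rfl

lemma pJen_eq_zero (d : Fin m → ℕ) (l : Fin m) (hl : p ≤ d l) : pJen p m d = 0 := by
  rw [pJen]
  refine Finset.prod_eq_zero (Finset.mem_univ l) ?_
  rw [← Nat.sub_add_cancel hl, pow_add, xA_sub_one_pow_p, mul_zero]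

lemma pJen_mem_W (d : Fin m → ℕ) (K : ℕ) (hK : K ≤ ∑ l, d l) : pJen p m d ∈ WJen p m K := by
  by_cases hd : ∀ l, d l < p
  · rw [pJen_eq_uJen p m d hd]
    refine Submodule.subset_span ⟨_, ?_, rfl⟩
    simpa using hK
  · push_neg at hd
    obtain ⟨l, hl⟩ := hd
    rw [pJen_eq_zero p m d l hl]
    exact Submodule.zero_mem _

lemma uJen_mul_pJen (i : Fin m → Fin p) (d : Fin m → ℕ) :
    uJen p m i * pJen p m d = pJen p m (fun l => (i l : ℕ) + d l) := by
  rw [uJen, pJen, pJen, ← Finset.prod_mul_distrib]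
  exact Finset.prod_congr rfl (fun l _ => (pow_add _ _ _).symm)

lemma mul_uJen_mem (K : ℕ) (i : Fin m → Fin p) (hi : K ≤ ∑ l, ((i l : ℕ))) (a : ModA p m) :
    a * uJen p m i ∈ WJen p m K := by
  have ha : a ∈ Submodule.span (ZMod p) (Set.range (uJen p m)) := by
    rw [uJen_span]; trivial
  refine Submodule.span_induction ?_ ?_ ?_ ?_ ha
  · rintro b ⟨κ, rfl⟩
    have hre : uJen p m i = pJen p m (fun l => ((i l : ℕ))) := rfl
    rw [hre, uJen_mul_pJen]
    refine pJen_mem_W p m _ K ?_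
    calc K ≤ ∑ l, ((i l : ℕ)) := hi
    _ ≤ ∑ l, ((κ l : ℕ) + (i l : ℕ)) := Finset.sum_le_sum (fun l _ => Nat.le_add_left _ _)
  · rw [zero_mul]; exact Submodule.zero_mem _
  · intro b c _ _ hb hc; rw [add_mul]; exact Submodule.add_mem _ hb hc
  · intro c b _ hb; rw [smul_mul_assoc]; exact Submodule.smul_mem _ _ hb

lemma mul_mem_W (K : ℕ) (a w : ModA p m) (hw : w ∈ WJen p m K) : a * w ∈ WJen p m K := by
  refine Submodule.span_induction ?_ ?_ ?_ ?_ hw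
  · rintro b ⟨i, hi, rfl⟩
    exact mul_uJen_mem p m K i hi a
  · rw [mul_zero]; exact Submodule.zero_mem _
  · intro b c _ _ hb hc; rw [mul_add]; exact Submodule.add_mem _ hb hc
  · intro c b _ hb; rw [mul_smul_comm]; exact Submodule.smul_mem _ _ hb

noncomputable def IJen (K : ℕ) : Ideal (ModA p m) where
  carrier := WJen p m K
  add_mem' := fun ha hb => Submodule.add_mem _ ha hb
  zero_mem' := Submodule.zero_mem _
  smul_mem' := fun a w hw => by
    rw [smul_eq_mul]; exact mul_mem_W p m K a w hw

lemma restrict_IJen (K : ℕ) :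
    Submodule.restrictScalars (ZMod p) (IJen p m K) = WJen p m K := by
  ext y; exact Iff.rfl

lemma uJen_mem_Mpow (i : Fin m → Fin p) : uJen p m i ∈ Mrad p m ^ (∑ l, ((i l : ℕ))) := by
  have key : ∀ s : Finset (Fin m),
      (∏ l ∈ s, (xA p m l - 1) ^ ((i l : ℕ))) ∈ Mrad p m ^ (∑ l ∈ s, ((i l : ℕ))) := by
    intro s
    induction s using Finset.cons_induction_on with
    | empty => simp
    | cons a s hj ih =>
      rw [Finset.prod_cons, Finset.sum_cons]
      have hgen : xA p m a - 1 ∈ Mrad p m := Ideal.subset_span ⟨a, rfl⟩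
      by_cases h0 : ∑ x ∈ s, (i x : ℕ) = 0
      · rw [h0, Nat.add_zero]; exact Ideal.mul_mem_right _ _ (Ideal.pow_mem_pow hgen _)
      rw [Submodule.pow_add _ h0]
      exact Ideal.mul_mem_mul (Ideal.pow_mem_pow hgen _) ih
  exact key Finset.univ

lemma WJen_zero : WJen p m 0 = ⊤ := by
  rw [WJen]
  have : {i : Fin m → Fin p | 0 ≤ ∑ k, ((i k : ℕ))} = Set.univ := by
    ext i; simp
  rw [this, Set.image_univ, uJen_span]

lemma pJen_single (l : Fin m) :
    pJen p m (fun l' => if l' = l then 1 else 0) = xA p m l - 1 := by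
  rw [pJen]
  have : ∀ l' : Fin m, (xA p m l' - 1) ^ (if l' = l then 1 else 0)
      = if l' = l then (xA p m l' - 1) else 1 := by
    intro l'; by_cases h : l' = l <;> simp [h]
  rw [Finset.prod_congr rfl (fun l' _ => this l')]
  rw [Finset.prod_ite_eq' Finset.univ l (fun l' => xA p m l' - 1)]
  simp

lemma uJen_mul_gen_mem (K : ℕ) (i : Fin m → Fin p) (hi : K ≤ ∑ l, ((i l : ℕ))) (l : Fin m) :
    uJen p m i * (xA p m l - 1) ∈ WJen p m (K + 1) := by
  rw [← pJen_single p m l]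
  have hre : uJen p m i = pJen p m (fun l' => ((i l' : ℕ))) := rfl
  rw [hre]
  have hcomb : pJen p m (fun l' => (i l' : ℕ)) * pJen p m (fun l' => if l' = l then 1 else 0)
      = pJen p m (fun l' => (i l' : ℕ) + (if l' = l then 1 else 0)) := by
    rw [pJen, pJen, pJen, ← Finset.prod_mul_distrib]
    exact Finset.prod_congr rfl (fun l' _ => (pow_add _ _ _).symm)
  rw [hcomb]
  refine pJen_mem_W p m _ _ ?_
  rw [Finset.sum_add_distrib, Finset.sum_ite_eq' Finset.univ l (fun _ => 1)]
  simp only [Finset.mem_univ, if_pos]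
  omega

lemma Mpow_eq_IJen (K : ℕ) : Mrad p m ^ K = IJen p m K := by
  induction K with
  | zero =>
    rw [Submodule.pow_zero, Ideal.one_eq_top]
    refine (eq_top_iff.mpr (fun y _ => ?_)).symm
    show y ∈ WJen p m 0
    rw [WJen_zero]; trivial
  | succ K ih =>
    refine le_antisymm ?_ ?_
    · rw [Submodule.pow_succ, ih]
      refine Ideal.mul_le.mpr (fun w hw r hr => ?_)
      have hw' : w ∈ WJen p m K := hw
      show w * r ∈ WJen p m (K + 1)
      refine Submodule.span_induction ?_ ?_ ?_ ?_ hr (p := fun r _ => w * r ∈ WJen p m (K+1))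
      · rintro c ⟨l, rfl⟩
        -- w * (x_l - 1), w ∈ WJen K
        refine Submodule.span_induction ?_ ?_ ?_ ?_ hw'
          (p := fun w _ => w * (xA p m l - 1) ∈ WJen p m (K+1))
        · rintro b ⟨i, hi, rfl⟩
          exact uJen_mul_gen_mem p m K i hi l
        · show (0 : ModA p m) * (xA p m l - 1) ∈ WJen p m (K+1)
          rw [zero_mul]; exact Submodule.zero_mem _
        · intro b c _ _ hb hc
          show (b + c) * (xA p m l - 1) ∈ WJen p m (K+1)
          rw [add_mul]; exact Submodule.add_mem _ hb hc
        · intro c b _ hb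
          show (c • b) * (xA p m l - 1) ∈ WJen p m (K+1)
          rw [smul_mul_assoc]; exact Submodule.smul_mem _ _ hb
      · show w * (0 : ModA p m) ∈ WJen p m (K+1)
        rw [mul_zero]; exact Submodule.zero_mem _
      · intro c d _ _ hc hd
        show w * (c + d) ∈ WJen p m (K+1)
        rw [mul_add]; exact Submodule.add_mem _ hc hd
      · intro c d _ hd
        show w * (c • d) ∈ WJen p m (K+1)
        rw [mul_smul_comm, smul_eq_mul]
        exact mul_mem_W p m _ c _ hd
    · intro y hy
      have hy' : y ∈ WJen p m (K+1) := hy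
      refine Submodule.span_induction ?_ ?_ ?_ ?_ hy'
      · rintro b ⟨i, hi, rfl⟩
        exact Ideal.pow_le_pow_right hi (uJen_mem_Mpow p m i)
      · exact Submodule.zero_mem _
      · intro b c _ _ hb hc; exact Submodule.add_mem _ hb hc
      · intro c b _ hb
        have : c • b = algebraMap (ZMod p) (ModA p m) c • b := (algebraMap_smul _ c b).symm
        rw [this]
        exact Submodule.smul_mem _ _ hb

lemma sub_const_mem_span (f : MvPolynomial (Fin m) (ZMod p)) :
    f - C (MvPolynomial.eval (fun _ => 1) f)
      ∈ Ideal.span (Set.range fun l : Fin m => (X l : MvPolynomial (Fin m) (ZMod p)) - 1) := by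
  induction f using MvPolynomial.induction_on with
  | C a => simp
  | add f g hf hg =>
    have : f + g - C (MvPolynomial.eval (fun _ => 1) (f + g))
        = (f - C (MvPolynomial.eval (fun _ => 1) f)) + (g - C (MvPolynomial.eval (fun _ => 1) g)) := by
      rw [map_add, map_add]; ring
    rw [this]; exact Submodule.add_mem _ hf hg
  | mul_X f i hf =>
    have : f * X i - C (MvPolynomial.eval (fun _ => 1) (f * X i))
        = f * (X i - 1) + (f - C (MvPolynomial.eval (fun _ => 1) f)) := by
      rw [map_mul, eval_X, mul_one]
      ring
    rw [this]
    exact Submodule.add_mem _ (Ideal.mul_mem_left _ _ (Ideal.subset_span ⟨i, rfl⟩)) hf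

lemma Mrad_eq_ker : Mrad p m = RingHom.ker (epsA p m) := by
  refine le_antisymm ?_ ?_
  · rw [Mrad, Ideal.span_le]
    rintro y ⟨l, rfl⟩
    rw [SetLike.mem_coe, RingHom.mem_ker, map_sub]
    have h1 : epsA p m (xA p m l) = 1 := by rw [xA, epsA_mk]; simp
    have h2 : epsA p m 1 = 1 := map_one _
    rw [h1, h2, sub_self]
  · intro y hy
    obtain ⟨f, rfl⟩ := Ideal.Quotient.mk_surjective (I := Aideal p m) y
    rw [RingHom.mem_ker, epsA_mk] at hy
    have h3 := sub_const_mem_span p m f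
    rw [hy, map_zero, sub_zero] at h3
    have h4 : Ideal.Quotient.mk (Aideal p m) f ∈
        Ideal.map (Ideal.Quotient.mk (Aideal p m))
          (Ideal.span (Set.range fun l : Fin m => (X l : MvPolynomial (Fin m) (ZMod p)) - 1)) :=
      Ideal.mem_map_of_mem _ h3
    rw [Ideal.map_span] at h4
    have h5 : ((Ideal.Quotient.mk (Aideal p m)) ''
        (Set.range fun l : Fin m => (X l : MvPolynomial (Fin m) (ZMod p)) - 1))
        = Set.range fun l => xA p m l - 1 := by
      rw [← Set.range_comp]
      refine congrArg _ (funext fun l => ?_)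
      simp [Function.comp, xA, map_sub]
    rwa [h5] at h4

lemma epsA_surjective : Function.Surjective (epsA p m) := by
  intro a
  refine ⟨Ideal.Quotient.mk _ (C a), ?_⟩
  rw [epsA_mk]; simp

lemma Mrad_isMaximal : (Mrad p m).IsMaximal := by
  rw [Mrad_eq_ker]
  exact RingHom.ker_isMaximal_of_surjective _ (epsA_surjective p m)

lemma jacobson_bot_eq : Ideal.jacobson (⊥ : Ideal (ModA p m)) = Mrad p m := by
  refine le_antisymm ?_ ?_
  · exact sInf_le ⟨bot_le, Mrad_isMaximal p m⟩
  · rw [Mrad, Ideal.span_le]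
    rintro y ⟨l, rfl⟩
    rw [SetLike.mem_coe, Ideal.mem_jacobson_bot]
    intro z
    refine IsNilpotent.isUnit_add_one ⟨p, ?_⟩
    rw [mul_pow, xA_sub_one_pow_p, zero_mul]

end Main

section NT
variable (p : ℕ) [Fact p.Prime]
lemma sum_pow_card_sub_one : ∑ t : ZMod p, t ^ (p - 1) = -1 := by
  have hp : 1 < p := (Fact.out : p.Prime).one_lt
  have hterm : ∀ t : ZMod p, t ^ (p - 1) = if t = 0 then 0 else 1 := by
    intro t
    by_cases h : t = 0
    · rw [if_pos h, h, zero_pow (by omega)]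
    · rw [if_neg h, ZMod.pow_card_sub_one_eq_one h]
  rw [Finset.sum_congr rfl (fun t _ => hterm t)]
  have h2 : ∀ t : ZMod p, (if t = 0 then (0:ZMod p) else 1) = 1 - (if t = 0 then 1 else 0) := by
    intro t; by_cases h : t = 0 <;> simp [h]
  rw [Finset.sum_congr rfl (fun t _ => h2 t), Finset.sum_sub_distrib,
    Finset.sum_ite_eq' Finset.univ (0 : ZMod p) (fun _ => (1 : ZMod p))]
  simp only [Finset.mem_univ, if_pos, Finset.sum_const, Finset.card_univ, ZMod.card, nsmul_eq_mul,
    mul_one]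
  rw [ZMod.natCast_self]
  ring

lemma fPoly_zero (a : ℕ) : fPoly p a 0 = ∑ t : ZMod p, t ^ a := by
  rw [fPoly]
  exact Finset.sum_congr rfl (fun t _ => by rw [range_zero, Finset.prod_empty, mul_one])

lemma fPoly_succ (a k : ℕ) :
    fPoly p a (k + 1) = fPoly p (a + 1) k - (k : ZMod p) * fPoly p a k := by
  have h1 : ∀ t : ZMod p, t ^ a * ∏ r ∈ range (k+1), (t - (r:ℕ))
      = t ^ (a+1) * ∏ r ∈ range k, (t - (r:ℕ)) - (k:ZMod p) * (t ^ a * ∏ r ∈ range k, (t - (r:ℕ))) := by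
    intro t; rw [prod_range_succ]; ring
  rw [fPoly, Finset.sum_congr rfl (fun t _ => h1 t), Finset.sum_sub_distrib, ← Finset.mul_sum,
    fPoly, fPoly]

lemma fPoly_vals (k : ℕ) : ∀ a : ℕ,
    (a + k < p - 1 → fPoly p a k = 0) ∧ (a + k = p - 1 → fPoly p a k = -1) := by
  induction k with
  | zero =>
    intro a
    constructor
    · intro h
      rw [fPoly_zero]
      have hcard : Fintype.card (ZMod p) = p := ZMod.card p
      exact FiniteField.sum_pow_lt_card_sub_one _ _ (by omega)
    · intro h
      rw [fPoly_zero]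
      rw [Nat.add_zero] at h
      rw [h]
      exact sum_pow_card_sub_one p
  | succ k ih =>
    intro a
    constructor
    · intro h
      rw [fPoly_succ, (ih (a+1)).1 (by omega), (ih a).1 (by omega), mul_zero, sub_zero]
    · intro h
      rw [fPoly_succ, (ih (a+1)).2 (by omega), (ih a).1 (by omega), mul_zero, sub_zero]

lemma choose_prod (k : ℕ) (hk : k < p) (t : ZMod p) :
    (k.factorial : ZMod p) * (Nat.choose (t.val) k : ZMod p) = ∏ r ∈ range k, (t - (r : ℕ)) := by
  rcases le_or_gt k t.val with h | h
  · rw [← Nat.cast_mul, ← Nat.descFactorial_eq_factorial_mul_choose,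
      Nat.descFactorial_eq_prod_range, Nat.cast_prod]
    refine Finset.prod_congr rfl (fun r hr => ?_)
    rw [Finset.mem_range] at hr
    rw [Nat.cast_sub (by omega)]
    congr 1
    exact (ZMod.natCast_val t).trans (ZMod.cast_id p t)
  · rw [Nat.choose_eq_zero_of_lt h, Nat.cast_zero, mul_zero]
    refine (Finset.prod_eq_zero (i := t.val) (Finset.mem_range.mpr h) ?_).symm
    rw [show ((t.val : ℕ) : ZMod p) = t from (ZMod.natCast_val t).trans (ZMod.cast_id p t)]
    exact sub_self t

noncomputable def SS (p : ℕ) [NeZero p] (a k : ℕ) : ZMod p :=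
  ∑ t : ZMod p, t ^ a * (Nat.choose (t.val) k : ZMod p)

lemma factorial_mul_SS (a k : ℕ) (hk : k < p) :
    (k.factorial : ZMod p) * SS p a k = fPoly p a k := by
  rw [SS, Finset.mul_sum, fPoly]
  refine Finset.sum_congr rfl (fun t _ => ?_)
  rw [← choose_prod p k hk t]
  ring

lemma factorial_ne_zero (k : ℕ) (hk : k < p) : (k.factorial : ZMod p) ≠ 0 := by
  rw [Ne, ZMod.natCast_eq_zero_iff]
  rw [Nat.Prime.dvd_factorial (Fact.out : p.Prime)]
  omega

lemma SS_lo (a k : ℕ) (h : a + k < p - 1) : SS p a k = 0 := by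
  have hk : k < p := by omega
  have := factorial_mul_SS p a k hk
  rw [(fPoly_vals p k a).1 h] at this
  exact (mul_eq_zero.mp this).resolve_left (factorial_ne_zero p k hk)

lemma SS_hi (a k : ℕ) (h : a + k = p - 1) : SS p a k ≠ 0 := by
  have hp : 1 < p := (Fact.out : p.Prime).one_lt
  have hk : k < p := by omega
  intro h0
  have := factorial_mul_SS p a k hk
  rw [h0, mul_zero, (fPoly_vals p k a).2 h] at this
  have : (1 : ZMod p) = 0 := by
    have := congrArg Neg.neg this
    simpa using this
  exact one_ne_zero this

end NT

section Main2
variable (p m : ℕ) [Fact p.Prime]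

/-- one-variable generating sum -/
lemma gsum_eq (l : Fin m) (a : ℕ) :
    ∑ t : ZMod p, t ^ a • (xA p m l) ^ (t.val)
      = ∑ k : Fin p, SS p a (k : ℕ) • (xA p m l - 1) ^ ((k : ℕ)) := by
  have h1 : ∀ t : ZMod p, t ^ a • (xA p m l) ^ (t.val)
      = ∑ k : Fin p, (t ^ a * (Nat.choose t.val (k : ℕ) : ZMod p)) • (xA p m l - 1) ^ ((k : ℕ)) := by
    intro t
    rw [xA_pow_expand p m l t.val (ZMod.val_lt t), Finset.smul_sum]
    exact Finset.sum_congr rfl (fun k _ => smul_smul _ _ _)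
  rw [Finset.sum_congr rfl (fun t _ => h1 t), Finset.sum_comm]
  exact Finset.sum_congr rfl (fun k _ => by rw [← Finset.sum_smul]; rfl)

/-- psi of the evaluation vector of a reduced monomial -/
lemma psi_monomial (a : Fin m → Fin p) :
    psi p m (fun P => ∏ l, (P l) ^ ((a l : ℕ)))
      = ∑ κ : Fin m → Fin p, (∏ l, SS p ((a l : ℕ)) ((κ l : ℕ))) • uJen p m κ := by
  have h0 : psi p m (fun P => ∏ l, (P l) ^ ((a l : ℕ)))
      = ∑ j : Fin m → ZMod p, ∏ l, ((j l) ^ ((a l : ℕ)) • (xA p m l) ^ ((j l).val)) := by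
    show (∑ j : Fin m → ZMod p, (∏ l, (j l) ^ ((a l : ℕ))) • ∏ l, (xA p m l) ^ ((j l).val)) = _
    exact Finset.sum_congr rfl (fun j _ => (prod_smul'' _ _ _).symm)
  rw [h0]
  have h2 : ∑ j : Fin m → ZMod p, ∏ l, ((j l) ^ ((a l : ℕ)) • (xA p m l) ^ ((j l).val))
      = ∏ l, ∑ t : ZMod p, t ^ ((a l : ℕ)) • (xA p m l) ^ (t.val) := by
    rw [Finset.prod_univ_sum]
    rw [Fintype.piFinset_univ]
  rw [h2]
  have h3 : ∀ l : Fin m, (∑ t : ZMod p, t ^ ((a l : ℕ)) • (xA p m l) ^ (t.val))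
      = ∑ k : Fin p, SS p ((a l : ℕ)) ((k : ℕ)) • (xA p m l - 1) ^ ((k : ℕ)) :=
    fun l => gsum_eq p m l _
  rw [Finset.prod_congr rfl (fun l _ => h3 l), Finset.prod_univ_sum, Fintype.piFinset_univ]
  exact Finset.sum_congr rfl (fun κ _ => prod_smul'' _ _ _)

/-- exponent reduction -/
def redExp (p e : ℕ) : ℕ := if e = 0 then 0 else (e - 1) % (p - 1) + 1

lemma redExp_lt (e : ℕ) : redExp p e < p := by
  have hp : 1 < p := (Fact.out : p.Prime).one_lt
  rw [redExp]
  by_cases h : e = 0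
  · rw [if_pos h]; omega
  · rw [if_neg h]
    have := Nat.mod_lt (e - 1) (y := p - 1) (by omega)
    omega

lemma redExp_le (e : ℕ) : redExp p e ≤ e := by
  rw [redExp]
  by_cases h : e = 0
  · rw [if_pos h]; omega
  · rw [if_neg h]
    have := Nat.mod_le (e - 1) (p - 1)
    omega

lemma pow_redExp (t : ZMod p) (e : ℕ) : t ^ e = t ^ (redExp p e) := by
  have hp : 1 < p := (Fact.out : p.Prime).one_lt
  rw [redExp]
  by_cases h : e = 0
  · rw [if_pos h, h]
  · rw [if_neg h]
    by_cases ht : t = 0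
    · rw [ht, zero_pow h, zero_pow (by omega)]
    · have h1 : t ^ (p - 1) = 1 := ZMod.pow_card_sub_one_eq_one ht
      have h2 : (p - 1) * ((e - 1) / (p - 1)) + (e - 1) % (p - 1) = e - 1 :=
        Nat.div_add_mod (e - 1) (p - 1)
      calc t ^ e = t ^ ((p - 1) * ((e - 1) / (p - 1)) + ((e - 1) % (p - 1) + 1)) := by
            congr 1; omega
        _ = (t ^ (p - 1)) ^ ((e - 1) / (p - 1)) * t ^ ((e - 1) % (p - 1) + 1) := by
            rw [pow_add, pow_mul]
        _ = t ^ ((e - 1) % (p - 1) + 1) := by rw [h1, one_pow, one_mul]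

/-- reduced exponent function of a Finsupp -/
noncomputable def redE (d : Fin m →₀ ℕ) : Fin m → Fin p :=
  fun l => ⟨redExp p (d l), redExp_lt p _⟩

noncomputable def wMon (a : Fin m → Fin p) : ModA p m :=
  psi p m (fun P => ∏ l, (P l) ^ ((a l : ℕ)))

lemma evalVec_monomial (d : Fin m →₀ ℕ) (P : Fin m → ZMod p) :
    MvPolynomial.eval P (monomial d (1 : ZMod p)) = ∏ l, (P l) ^ ((redE p m d l : ℕ)) := by
  rw [eval_monomial, one_mul, Finsupp.prod]
  rw [Finset.prod_subset (Finset.subset_univ d.support)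
    (fun l _ hl => by rw [Finsupp.notMem_support_iff.mp hl, pow_zero])]
  exact Finset.prod_congr rfl (fun l _ => pow_redExp p _ _)

lemma evalVec_expOf (a : Fin m → Fin p) (P : Fin m → ZMod p) :
    MvPolynomial.eval P (monomial (expOf a) (1 : ZMod p)) = ∏ l, (P l) ^ ((a l : ℕ)) := by
  rw [eval_monomial, one_mul, Finsupp.prod]
  rw [Finset.prod_subset (Finset.subset_univ (expOf a).support)
    (fun l _ hl => by rw [Finsupp.notMem_support_iff.mp hl, pow_zero])]
  rfl

lemma sum_redE_le (d : Fin m →₀ ℕ) : (∑ l, ((redE p m d l : ℕ))) ≤ d.sum (fun _ e => e) := by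
  rw [Finsupp.sum_fintype _ _ (fun _ => rfl)]
  exact Finset.sum_le_sum (fun l _ => redExp_le p _)

lemma sum_expOf (a : Fin m → Fin p) : (expOf a).sum (fun _ e => e) = ∑ l, ((a l : ℕ)) := by
  rw [Finsupp.sum_fintype _ _ (fun _ => rfl)]
  rfl

lemma map_psi_GRM (ω : ℕ) :
    Submodule.map (psi p m) (GRM (ZMod p) m ω)
      = Submodule.span (ZMod p) (wMon p m '' {a | ∑ l, ((a l : ℕ)) ≤ ω}) := by
  rw [GRM, Submodule.map_span]
  refine le_antisymm ?_ ?_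
  · rw [Submodule.span_le]
    rintro y ⟨v, ⟨f, hdeg, rfl⟩, rfl⟩
    have hfun : (fun P : Fin m → ZMod p => MvPolynomial.eval P f)
        = ∑ d ∈ f.support, MvPolynomial.coeff d f •
            (fun P : Fin m → ZMod p => MvPolynomial.eval P (monomial d (1 : ZMod p))) := by
      funext P
      rw [Finset.sum_apply]
      conv_lhs => rw [f.as_sum]
      rw [map_sum]
      refine Finset.sum_congr rfl (fun d hd => ?_)
      rw [Pi.smul_apply, eval_monomial, eval_monomial, smul_eq_mul, one_mul]
    rw [SetLike.mem_coe, hfun, map_sum]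
    refine Submodule.sum_mem _ (fun d hd => ?_)
    rw [LinearMap.map_smul]
    refine Submodule.smul_mem _ _ (Submodule.subset_span ⟨redE p m d, ?_, ?_⟩)
    · have h1 : (∑ l, ((redE p m d l : ℕ))) ≤ d.sum (fun _ e => e) := sum_redE_le p m d
      have h2 : d.sum (fun _ e => e) ≤ f.totalDegree := MvPolynomial.le_totalDegree hd
      exact Set.mem_setOf.mpr (by omega)
    · rw [wMon]
      congr 1
      funext P
      exact (evalVec_monomial p m d P).symm
  · rw [Submodule.span_le]
    rintro y ⟨a, ha, rfl⟩
    rw [SetLike.mem_coe]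
    have heq : wMon p m a
        = psi p m (fun P => MvPolynomial.eval P (monomial (expOf a) (1:ZMod p))) := by
      rw [wMon]
      congr 1
      funext P
      exact (evalVec_expOf p m a P).symm
    refine Submodule.subset_span
      ⟨(fun P => MvPolynomial.eval P (monomial (expOf a) (1:ZMod p))),
        ⟨monomial (expOf a) 1, ?_, rfl⟩, heq.symm⟩
    rw [MvPolynomial.totalDegree_monomial _ (one_ne_zero), sum_expOf]
    exact ha

/-- the flip involution -/
def sigmaF (a : Fin m → Fin p) : Fin m → Fin p :=
  fun l => ⟨p - 1 - (a l : ℕ), by have := (a l).2; omega⟩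

lemma sigmaF_invol (a : Fin m → Fin p) : sigmaF p m (sigmaF p m a) = a := by
  funext l
  have := (a l).2
  exact Fin.ext (by simp only [sigmaF]; omega)

lemma sum_sigmaF (a : Fin m → Fin p) :
    (∑ l, ((sigmaF p m a l : ℕ))) + (∑ l, ((a l : ℕ))) = m * (p - 1) := by
  rw [← Finset.sum_add_distrib]
  have h : ∀ l : Fin m, ((sigmaF p m a l : ℕ)) + ((a l : ℕ)) = p - 1 := by
    intro l
    have := (a l).2
    simp only [sigmaF]
    omega
  rw [Finset.sum_congr rfl (fun l _ => h l), Finset.sum_const, Finset.card_univ,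
    Fintype.card_fin, smul_eq_mul]

lemma span_wMon_eq (ω : ℕ) (hω : ω ≤ m * (p - 1)) :
    Submodule.span (ZMod p) (wMon p m '' {a | ∑ l, ((a l : ℕ)) ≤ ω})
      = WJen p m (m * (p - 1) - ω) := by
  set N := m * (p - 1) - ω with hN
  have key := tri_span (uJen p m) (fun κ => wMon p m (sigmaF p m κ)) (uJen_indep p m)
    (fun κ j => ∏ l, SS p ((sigmaF p m κ l : ℕ)) ((j l : ℕ)))
    (fun κ => psi_monomial p m (sigmaF p m κ))
    ?_ ?_ {i | N ≤ ∑ k, ((i k : ℕ))} ?_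
  · rw [WJen, ← key]
    have hset : sigmaF p m '' {i | N ≤ ∑ k, ((i k : ℕ))} = {a | ∑ l, ((a l : ℕ)) ≤ ω} := by
      ext a
      constructor
      · rintro ⟨b, hb, rfl⟩
        have h2 : N ≤ ∑ k, ((b k : ℕ)) := hb
        have h1 := sum_sigmaF p m b
        exact Set.mem_setOf.mpr (by omega)
      · intro ha
        have h2 : ∑ l, ((a l : ℕ)) ≤ ω := ha
        refine ⟨sigmaF p m a, ?_, sigmaF_invol p m a⟩
        have h1 := sum_sigmaF p m a
        exact Set.mem_setOf.mpr (by omega)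
    have himg : ((fun κ => wMon p m (sigmaF p m κ)) '' {i | N ≤ ∑ k, ((i k : ℕ))})
        = wMon p m '' {a | ∑ l, ((a l : ℕ)) ≤ ω} := by
      rw [← hset]
      exact (Set.image_image (wMon p m) (sigmaF p m) _).symm
    rw [himg]
  · -- htri
    intro κ j hne
    intro l
    by_contra hlt
    rw [not_le] at hlt
    refine hne (Finset.prod_eq_zero (Finset.mem_univ l) ?_)
    refine SS_lo p _ _ ?_
    have h1 := (κ l).2
    have h2 : ((sigmaF p m κ l : ℕ)) = p - 1 - ((κ l : ℕ)) := rfl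
    have h3 : ((j l : ℕ)) < ((κ l : ℕ)) := hlt
    omega
  · -- hdiag
    intro κ
    rw [Finset.prod_ne_zero_iff]
    intro l _
    refine SS_hi p _ _ ?_
    have h1 := (κ l).2
    have h2 : ((sigmaF p m κ l : ℕ)) = p - 1 - ((κ l : ℕ)) := rfl
    omega
  · -- up-closed
    intro i j hij hi
    have h1 : N ≤ ∑ k, ((i k : ℕ)) := hi
    exact Set.mem_setOf.mpr (le_trans h1 (Finset.sum_le_sum (fun l _ => hij l)))

end Main2

set_option synthInstance.maxHeartbeats 1000000 in
set_option maxHeartbeats 1000000 in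
/-- Berman–Charpin: `ψ(C_ω(m,p)) = P^{m(p-1)-ω}` where `P` is the Jacobson
radical of `A`, and the Jennings elements with `Σ i_k ≥ m(p-1) − ω` form an
`F_p`-basis of `P^{m(p-1)-ω}`. -/
theorem grm_radical_power (p m : ℕ) (hp : p.Prime) [NeZero p] (hm : 1 ≤ m)
    (ω : ℕ) (hω : ω ≤ m * (p - 1)) :
    Submodule.map (psi p m) (GRM (ZMod p) m ω)
        = Submodule.restrictScalars (ZMod p)
            ((Ideal.jacobson (⊥ : Ideal (ModA p m))) ^ (m * (p - 1) - ω))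
    ∧ LinearIndependent (ZMod p)
        (fun i : {i : Fin m → Fin p // m * (p - 1) - ω ≤ ∑ k, (i k : ℕ)} =>
          ∏ l, (xA p m l - 1) ^ ((i.1 l : ℕ)))
    ∧ Submodule.span (ZMod p)
        (Set.range (fun i : {i : Fin m → Fin p // m * (p - 1) - ω ≤ ∑ k, (i k : ℕ)} =>
          ∏ l, (xA p m l - 1) ^ ((i.1 l : ℕ))))
        = Submodule.restrictScalars (ZMod p)
            ((Ideal.jacobson (⊥ : Ideal (ModA p m))) ^ (m * (p - 1) - ω)) := by
  haveI : Fact p.Prime := ⟨hp⟩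
  have hres : Submodule.restrictScalars (ZMod p)
      ((Ideal.jacobson (⊥ : Ideal (ModA p m))) ^ (m * (p - 1) - ω))
      = WJen p m (m * (p - 1) - ω) := by
    rw [jacobson_bot_eq p m, Mpow_eq_IJen p m]
    exact restrict_IJen p m _
  refine ⟨?_, ?_, ?_⟩
  · rw [map_psi_GRM p m ω, span_wMon_eq p m ω hω, hres]
  · exact (uJen_indep p m).comp Subtype.val Subtype.val_injective
  · have hr : Set.range (fun i : {i : Fin m → Fin p // m * (p - 1) - ω ≤ ∑ k, (i k : ℕ)} =>
        ∏ l, (xA p m l - 1) ^ ((i.1 l : ℕ)))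
        = uJen p m '' {i | m * (p - 1) - ω ≤ ∑ k, ((i k : ℕ))} := by
      rw [Set.image_eq_range]
      rfl
    rw [hr, hres]
    rfl
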